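/- Let p_i(x) ∈ ℤ[x] be defined by p_1 = p_2 = 1 and p_{i+1} = p_i − x·p_{i−1}. Then the polynomials y^i(y+1)^{j−1−2i} for 0 ≤ i ≤ ⌊(j−1)/2⌋ form a basis of the space of palindromic polynomials of degree j−1 in y, and the integers c_i^j defined by expanding 1+y+…+y^{j−1} in this basis satisfy the recurrence c_i^{j+1} = c_i^j − c_{i−1}^{j−1}. -/

import Mathlib

open Polynomial

/-- The basis family `y^i (y+1)^{j−1−2i}`, `0 ≤ i ≤ ⌊(j−1)/2⌋`. -/
noncomputable def basisFam (j : ℕ) (i : Fin ((j - 1) / 2 + 1)) : Polynomial ℤ :=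
  Polynomial.X ^ (i : ℕ) * (Polynomial.X + 1) ^ (j - 1 - 2 * (i : ℕ))

/-- `c : ℕ → ℤ` gives the expansion of `1 + y + ⋯ + y^{j−1}` in the family
`y^i(y+1)^{j−1−2i}`, with `c i = 0` outside the index range. -/
def expandsAs (j : ℕ) (c : ℕ → ℤ) : Prop :=
  (∀ i : ℕ, (j - 1) / 2 < i → c i = 0) ∧
  (∑ i ∈ Finset.range ((j - 1) / 2 + 1),
      Polynomial.C (c i) * Polynomial.X ^ i * (Polynomial.X + 1) ^ (j - 1 - 2 * i) =
    ∑ i ∈ Finset.range j, (Polynomial.X : Polynomial ℤ) ^ i)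

lemma coeff_term (a : ℤ) (m f k : ℕ) :
    (C a * X ^ m * (X + 1) ^ f).coeff k
      = a * (if m ≤ k then ((f.choose (k - m) : ℤ)) else 0) := by
  rw [mul_assoc, coeff_C_mul, mul_comm ((X : Polynomial ℤ) ^ m), coeff_mul_X_pow']
  split <;> simp [coeff_X_add_one_pow]

lemma trailing {N : ℕ} (f : ℕ → ℕ) (d : ℕ → ℤ)
    (h : ∑ i ∈ Finset.range N, (C (d i) * X ^ i * (X + 1) ^ f i) = 0) :
    ∀ i, i < N → d i = 0 := by
  intro i
  induction i using Nat.strong_induction_on with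
  | _ i IH =>
    intro hiN
    have hc := congrArg (fun p => Polynomial.coeff p i) h
    simp only [finset_sum_coeff, coeff_zero, coeff_term] at hc
    rw [Finset.sum_eq_single i] at hc
    · simpa using hc
    · intro b _ hbi
      rcases lt_or_gt_of_ne hbi with hlt | hgt
      · rw [IH b hlt (by omega)]; ring
      · simp [Nat.not_le.mpr hgt]
    · intro h'; exact absurd (Finset.mem_range.mpr hiN) h'

lemma linind (j : ℕ) : LinearIndependent ℤ (basisFam j) := by
  rw [Fintype.linearIndependent_iff]
  intro g hg i
  have h0 : ∑ m ∈ Finset.range ((j - 1) / 2 + 1),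
      C (if h : m < (j - 1) / 2 + 1 then g ⟨m, h⟩ else 0) * X ^ m
        * (X + 1) ^ (j - 1 - 2 * m) = 0 := by
    rw [← Fin.sum_univ_eq_sum_range (fun m =>
      C (if h : m < (j - 1) / 2 + 1 then g ⟨m, h⟩ else 0) * X ^ m
        * (X + 1) ^ (j - 1 - 2 * m)) ((j - 1) / 2 + 1), ← hg]
    refine Finset.sum_congr rfl fun i _ => ?_
    simp [i.isLt, basisFam, smul_eq_C_mul, mul_assoc]
  have := trailing _ _ h0 i i.isLt
  simpa [i.isLt] using this

lemma mulX_span {j : ℕ} (hj : 3 ≤ j) {R : Polynomial ℤ}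
    (hR : R ∈ Submodule.span ℤ (Set.range (basisFam (j - 2)))) :
    X * R ∈ Submodule.span ℤ (Set.range (basisFam j)) := by
  induction hR using Submodule.span_induction with
  | mem x hx =>
      obtain ⟨i, rfl⟩ := hx
      have hi : (i : ℕ) + 1 < (j - 1) / 2 + 1 := by
        have := i.isLt; omega
      apply Submodule.subset_span
      refine ⟨⟨(i : ℕ) + 1, hi⟩, ?_⟩
      show X ^ ((i : ℕ) + 1) * (X + 1) ^ (j - 1 - 2 * ((i : ℕ) + 1))
        = X * (X ^ (i : ℕ) * (X + 1) ^ (j - 2 - 1 - 2 * (i : ℕ)))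
      rw [show j - 1 - 2 * ((i : ℕ) + 1) = j - 2 - 1 - 2 * (i : ℕ) by omega]
      ring
  | zero => simp
  | add x y _ _ hx hy => rw [mul_add]; exact add_mem hx hy
  | smul a x _ hx => rw [mul_smul_comm]; exact Submodule.smul_mem _ a hx

lemma geom_step (n : ℕ) :
    (X : Polynomial ℤ) * ∑ i ∈ Finset.range n, X ^ i
      = (∑ i ∈ Finset.range (n + 1), X ^ i) - 1 := by
  rw [Finset.mul_sum, Finset.sum_range_succ' (fun i => (X : Polynomial ℤ) ^ i) n]
  simp [pow_succ, mul_comm]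

lemma recur (j : ℕ) (hj : 2 ≤ j) (c c' c'' : ℕ → ℤ)
    (hA : expandsAs (j - 1) c) (hB : expandsAs j c') (hC : expandsAs (j + 1) c'') :
    ∀ i : ℕ, c'' i = c' i - (if i = 0 then 0 else c (i - 1)) := by
  obtain ⟨hA1, hA2⟩ := hA
  obtain ⟨hB1, hB2⟩ := hB
  obtain ⟨hC1, hC2⟩ := hC
  simp only [Nat.add_sub_cancel] at hC1 hC2
  -- Step 1: extended expansion of S_j multiplied by (X+1)
  have hB' : ∑ i ∈ Finset.range (j / 2 + 1),
      C (c' i) * X ^ i * (X + 1) ^ (j - 2 * i)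
      = (X + 1) * ∑ i ∈ Finset.range j, (X : Polynomial ℤ) ^ i := by
    rw [← hB2, Finset.mul_sum]
    rw [← Finset.sum_subset (Finset.range_subset_range.mpr (show (j-1)/2+1 ≤ j/2+1 by omega))
      (fun i _ hi => by
        rw [hB1 i (by simpa using Nat.lt_of_lt_of_le (Nat.lt_of_not_ge
          (fun h => hi (Finset.mem_range.mpr (by omega)))) le_rfl)]
        simp)]
    refine Finset.sum_congr rfl fun i hi => ?_
    have hir := Finset.mem_range.mp hi
    rw [show j - 2 * i = (j - 1 - 2 * i) + 1 by omega, pow_succ]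
    ring
  -- Step 2: shifted expansion of S_{j-1} multiplied by X
  have hA' : ∑ i ∈ Finset.range (j / 2 + 1),
      C (if i = 0 then 0 else c (i - 1)) * X ^ i * (X + 1) ^ (j - 2 * i)
      = X * ∑ i ∈ Finset.range (j - 1), (X : Polynomial ℤ) ^ i := by
    rw [Finset.sum_range_succ' (fun i =>
      C (if i = 0 then 0 else c (i - 1)) * X ^ i * (X + 1) ^ (j - 2 * i)) (j / 2)]
    simp only [eq_self_iff_true, if_true, map_zero, zero_mul, add_zero,
      Nat.add_sub_cancel, if_neg (Nat.succ_ne_zero _)]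
    have hr : (j - 1 - 1) / 2 + 1 = j / 2 := by omega
    rw [hr] at hA2
    rw [← hA2, Finset.mul_sum]
    refine Finset.sum_congr rfl fun i _ => ?_
    rw [show j - 2 * (i + 1) = j - 1 - 1 - 2 * i by omega, pow_succ]
    ring
  -- Step 3: geometric identity
  have hGeom : ((X : Polynomial ℤ) + 1) * ∑ i ∈ Finset.range j, (X : Polynomial ℤ) ^ i
      - X * ∑ i ∈ Finset.range (j - 1), (X : Polynomial ℤ) ^ i
      = ∑ i ∈ Finset.range (j + 1), (X : Polynomial ℤ) ^ i := by
    have g1 := geom_step (j - 1)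
    rw [show j - 1 + 1 = j by omega] at g1
    have g2 := geom_step j
    linear_combination g2 - g1
  -- Step 4: the vanishing combination
  have hz : ∑ i ∈ Finset.range (j / 2 + 1),
      C (c'' i - (c' i - (if i = 0 then 0 else c (i - 1)))) * X ^ i
        * (X + 1) ^ (j - 2 * i) = 0 := by
    have e : ∀ i ∈ Finset.range (j / 2 + 1),
        C (c'' i - (c' i - (if i = 0 then 0 else c (i - 1)))) * X ^ i
          * (X + 1) ^ (j - 2 * i)
        = C (c'' i) * X ^ i * (X + 1) ^ (j - 2 * i)
          - (C (c' i) * X ^ i * (X + 1) ^ (j - 2 * i)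
            - C (if i = 0 then 0 else c (i - 1)) * X ^ i * (X + 1) ^ (j - 2 * i)) := by
      intro i _
      rw [map_sub, map_sub]
      ring
    rw [Finset.sum_congr rfl e, Finset.sum_sub_distrib, Finset.sum_sub_distrib,
      hC2, hB', hA', hGeom, sub_self]
  intro i
  rcases lt_or_ge i (j / 2 + 1) with hi | hi
  · have := trailing _ _ hz i hi
    linarith [this]
  · rw [hC1 i (by omega), hB1 i (by omega)]
    rw [if_neg (show i ≠ 0 by omega), hA1 (i - 1) (by omega)]
    ring

lemma span_main : ∀ j : ℕ, 1 ≤ j → ∀ P : Polynomial ℤ,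
    P.natDegree ≤ j - 1 →
    (∀ m : ℕ, m ≤ j - 1 → P.coeff m = P.coeff (j - 1 - m)) →
    P ∈ Submodule.span ℤ (Set.range (basisFam j)) := by
  intro j
  induction j using Nat.strong_induction_on with
  | _ j IH =>
    intro hj P hdeg hsym
    set a := P.coeff 0 with ha
    set Q := P - C a * (X + 1) ^ (j - 1) with hQ
    have hcoe : ∀ m, Q.coeff m = P.coeff m - a * ((j - 1).choose m : ℤ) := by
      intro m
      simp [hQ, coeff_X_add_one_pow]
    have hQdeg : Q.natDegree ≤ j - 1 := by
      refine (natDegree_sub_le _ _).trans (max_le hdeg ?_)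
      refine (natDegree_C_mul_le _ _).trans ?_
      refine natDegree_pow_le.trans ?_
      have : (X + 1 : Polynomial ℤ).natDegree ≤ 1 := by
        simpa using natDegree_X_add_C (1 : ℤ) ▸ le_refl _
      calc (j - 1) * (X + 1 : Polynomial ℤ).natDegree ≤ (j - 1) * 1 :=
            Nat.mul_le_mul_left _ this
        _ = j - 1 := by omega
    have hQ0 : Q.coeff 0 = 0 := by simp [hcoe, ha]
    have hQtop : Q.coeff (j - 1) = 0 := by
      rw [hcoe, hsym (j - 1) le_rfl, Nat.sub_self, Nat.choose_self]
      simp [ha]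
    have hQsym : ∀ m, m ≤ j - 1 → Q.coeff m = Q.coeff (j - 1 - m) := by
      intro m hm
      rw [hcoe, hcoe, hsym m hm, Nat.choose_symm hm]
    have hmem0 : C a * (X + 1) ^ (j - 1) ∈ Submodule.span ℤ (Set.range (basisFam j)) := by
      have h1 : C a * (X + 1) ^ (j - 1) = a • basisFam j ⟨0, Nat.succ_pos _⟩ := by
        simp [basisFam, smul_eq_C_mul]
      rw [h1]
      exact Submodule.smul_mem _ _ (Submodule.subset_span ⟨_, rfl⟩)
    have hPQ : P = Q + C a * (X + 1) ^ (j - 1) := by rw [hQ]; ring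
    rcases le_or_gt j 2 with hj2 | hj2
    · have hQz : Q = 0 := by
        ext m
        rcases Nat.eq_zero_or_pos m with rfl | hm
        · simpa using hQ0
        · rcases lt_or_ge m j with hmj | hmj
          · have hm1 : m = j - 1 := by omega
            simpa [hm1] using hQtop
          · simp [coeff_eq_zero_of_natDegree_lt (show Q.natDegree < m by omega)]
      rw [hPQ, hQz, zero_add]
      exact hmem0
    · -- j ≥ 3
      have hQR : Q = X * Q.divX := by
        have h2 := X_mul_divX_add Q
        rw [hQ0] at h2; simpa using h2.symm
      have hRdeg : Q.divX.natDegree ≤ j - 2 - 1 := by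
        rw [natDegree_le_iff_coeff_eq_zero]
        intro m hm
        rw [coeff_divX]
        rcases eq_or_lt_of_le (show j - 1 ≤ m + 1 by omega) with he | hl
        · rw [← he]; exact hQtop
        · exact coeff_eq_zero_of_natDegree_lt (lt_of_le_of_lt hQdeg hl)
      have hRsym : ∀ m, m ≤ j - 2 - 1 → Q.divX.coeff m = Q.divX.coeff (j - 2 - 1 - m) := by
        intro m hm
        rw [coeff_divX, coeff_divX, hQsym (m + 1) (by omega)]
        congr 1
        omega
      have hRmem := IH (j - 2) (by omega) (by omega) Q.divX hRdeg hRsym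
      rw [hPQ, hQR]
      exact add_mem (mulX_span (by omega) hRmem) hmem0

theorem stmt_8 (j : ℕ) (hj : 1 ≤ j) :
    (LinearIndependent ℤ (basisFam j) ∧
      ∀ P : Polynomial ℤ,
        P.natDegree ≤ j - 1 →
        (∀ m : ℕ, m ≤ j - 1 → P.coeff m = P.coeff (j - 1 - m)) →
        P ∈ Submodule.span ℤ (Set.range (basisFam j))) ∧
    (2 ≤ j →
      ∀ c c' c'' : ℕ → ℤ,
        expandsAs (j - 1) c → expandsAs j c' → expandsAs (j + 1) c'' →
        ∀ i : ℕ, c'' i = c' i - (if i = 0 then 0 else c (i - 1))) := by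
  exact ⟨⟨linind j, fun P hdeg hsym => span_main j hj P hdeg hsym⟩,
    fun hj2 c c' c'' hA hB hC i => recur j hj2 c c' c'' hA hB hC i⟩
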